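/- Let a₁,…,aₘ ∈ ℚⁿ with common denominator q = p₁⋯pₛ square-free (the pⱼ distinct primes), let A be the m×n integer matrix with rows q·aᵢ, and let Λ = ⟨ℤⁿ, a₁,…,aₘ⟩_ℤ. Suppose M ⊆ {1,…,n} is a set of coordinate indices such that for every j ∈ {1,…,s}, M contains a set of rank_j(A) column indices whose corresponding columns of A are linearly independent over 𝔽_{pⱼ}. Then d(ℰ, Λ) ≤ |M|, where ℰ is the standard basis of ℤⁿ. -/

import Mathlib

open Matrix Module

/-- The integer lattice ℤⁿ viewed as a ℤ-submodule of ℚⁿ. -/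
def intLattice (n : ℕ) : Submodule ℤ (Fin n → ℚ) :=
  Submodule.span ℤ (Set.range fun i => (Pi.single i 1 : Fin n → ℚ))

/-- The defect d(ℰ, Λ): the smallest d such that some n − d standard basis vectors
together with d lattice vectors form a ℤ-basis of Λ. -/
noncomputable def defect (n : ℕ) (Λ : Submodule ℤ (Fin n → ℚ)) : ℕ :=
  sInf {d | ∃ (S : Finset (Fin n)) (b : Basis (Fin n) ℤ Λ),
    S.card = n - d ∧ ∀ i ∈ S, ∃ j, (b j : Fin n → ℚ) = Pi.single i 1}

def intCoords (n : ℕ) : Submodule ℤ (Fin n → ℚ) where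
  carrier := {x | ∀ i, ∃ z : ℤ, x i = z}
  add_mem' := by
    rintro x y hx hy i
    obtain ⟨zx, hzx⟩ := hx i; obtain ⟨zy, hzy⟩ := hy i
    exact ⟨zx + zy, by simp [hzx, hzy]⟩
  zero_mem' := fun i => ⟨0, by simp⟩
  smul_mem' := by
    rintro c x hx i
    obtain ⟨z, hz⟩ := hx i
    exact ⟨c * z, by simp [hz, zsmul_eq_mul]⟩

lemma intLattice_eq (n : ℕ) : intLattice n = intCoords n := by
  apply le_antisymm
  · rw [intLattice, Submodule.span_le]
    rintro _ ⟨i, rfl⟩ j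
    rcases eq_or_ne j i with h | h
    · exact ⟨1, by subst h; simp⟩
    · exact ⟨0, by simp [Pi.single_apply, h]⟩
  · intro x hx
    choose z hz using hx
    have hrepr : x = ∑ i, z i • (Pi.single i 1 : Fin n → ℚ) := by
      funext j
      rw [Finset.sum_apply]
      have h1 : ∀ i, (z i • (Pi.single i 1 : Fin n → ℚ)) j = if j = i then (z i : ℚ) else 0 := by
        intro i
        simp only [Pi.smul_apply, Pi.single_apply, zsmul_eq_mul]
        split <;> simp
      rw [Finset.sum_congr rfl fun i _ => h1 i, Finset.sum_ite_eq]
      simp [hz j]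
    rw [hrepr, intLattice]
    exact Submodule.sum_mem _ fun i _ =>
      Submodule.smul_mem _ _ (Submodule.subset_span ⟨i, rfl⟩)

lemma mem_intCoords {n : ℕ} {x : Fin n → ℚ} : x ∈ intCoords n ↔ ∀ i, ∃ z : ℤ, x i = z :=
  Iff.rfl

lemma rowspace_vanish {F : Type*} [Field F] {m n : ℕ} (B : Matrix (Fin m) (Fin n) F)
    (T : Finset (Fin n)) (hcard : T.card = B.rank)
    (hli : LinearIndependent F fun j : T => fun i : Fin m => B i (j : Fin n))
    (k : Fin m → F) (hT : ∀ j ∈ T, B.vecMul k j = 0) : ∀ j, B.vecMul k j = 0 := by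
  classical
  set C : Matrix (Fin m) T F := B.submatrix id (fun j : T => (j : Fin n)) with hC
  have hCinj : Function.Injective C.mulVec := by
    rw [Matrix.mulVec_injective_iff]
    exact hli
  have hrankC : C.rank = T.card := by
    rw [Matrix.rank, LinearMap.finrank_range_of_inj hCinj]
    simp [Module.finrank_fintype_fun_eq_card]
  set V := LinearMap.range B.vecMulLinear with hV
  have hVrank : finrank F ↥V = B.rank := by
    rw [hV, ← Matrix.transpose_transpose B, Matrix.vecMulLinear_transpose, ← Matrix.rank,
      Matrix.rank_transpose, Matrix.transpose_transpose]
  set π : (Fin n → F) →ₗ[F] (T → F) := LinearMap.funLeft F F (fun j : T => (j : Fin n)) with hπ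
  set g : V →ₗ[F] (T → F) := π.comp V.subtype with hg
  have hcomp : π.comp B.vecMulLinear = C.vecMulLinear := by
    apply LinearMap.ext; intro v
    funext j
    simp [hπ, LinearMap.funLeft, Matrix.vecMul, dotProduct, hC,
      Matrix.vecMulLinear_apply]
  have hrangeg : LinearMap.range g = LinearMap.range C.vecMulLinear := by
    rw [hg, LinearMap.range_comp, Submodule.range_subtype, hV, ← LinearMap.range_comp, hcomp]
  have hrankg : finrank F ↥(LinearMap.range g) = T.card := by
    rw [hrangeg, ← Matrix.transpose_transpose C, Matrix.vecMulLinear_transpose, ← Matrix.rank,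
      Matrix.rank_transpose, hrankC]
  have hker : LinearMap.ker g = ⊥ := by
    have h1 := LinearMap.finrank_range_add_finrank_ker g
    rw [hrankg, hVrank, ← hcard] at h1
    have h2 : finrank F ↥(LinearMap.ker g) = 0 := by omega
    exact Submodule.finrank_eq_zero.mp h2
  have hw : B.vecMul k ∈ V := ⟨k, rfl⟩
  have hmem : (⟨B.vecMul k, hw⟩ : V) ∈ LinearMap.ker g := by
    rw [LinearMap.mem_ker]
    funext j
    simpa [hg, hπ, LinearMap.funLeft] using hT j j.2
  rw [hker, Submodule.mem_bot] at hmem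
  intro j
  have := congrArg Subtype.val hmem
  exact congrFun this j

lemma key_claim (n m : ℕ) (a : Fin m → (Fin n → ℚ)) (q : ℕ) (hq0 : 0 < q)
    (hqsf : Squarefree q)
    (A : Matrix (Fin m) (Fin n) ℤ)
    (hA : ∀ i j, (q : ℚ) * a i j = (A i j : ℚ))
    (M : Finset (Fin n))
    (hM : ∀ p : ℕ, p.Prime → p ∣ q →
      ∃ T : Finset (Fin n), T ⊆ M ∧
        T.card = (A.map (Int.cast : ℤ → ZMod p)).rank ∧
        LinearIndependent (ZMod p) fun j : T => fun i : Fin m => (A i j : ZMod p))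
    (x : Fin n → ℚ) (hx : x ∈ intLattice n ⊔ Submodule.span ℤ (Set.range a))
    (hxM : ∀ i ∈ M, x i = 0) : x ∈ intLattice n := by
  obtain ⟨u, hu, v, hv, rfl⟩ := Submodule.mem_sup.mp hx
  rw [intLattice_eq] at hu
  rw [mem_intCoords] at hu
  choose u' hu' using hu
  obtain ⟨k, hk⟩ := (Submodule.mem_span_range_iff_exists_fun ℤ).mp hv
  set z : Fin n → ℤ := Matrix.vecMul k A with hz
  have hqx : ∀ j, (q : ℚ) * ((u + v) j) = (q : ℚ) * (u' j : ℚ) + ((z j : ℤ) : ℚ) := by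
    intro j
    have hvj : v j = ∑ i, (k i : ℚ) * a i j := by
      rw [← hk]; simp [Finset.sum_apply, zsmul_eq_mul]
    have h2 : (q : ℚ) * v j = ((z j : ℤ) : ℚ) := by
      rw [hvj, Finset.mul_sum, hz]
      have : ∀ i ∈ Finset.univ, (q : ℚ) * ((k i : ℚ) * a i j) = (k i : ℚ) * (A i j : ℚ) := by
        intro i _
        rw [← hA i j]; ring
      rw [Finset.sum_congr rfl this]
      simp [Matrix.vecMul, dotProduct]
    simp only [Pi.add_apply, mul_add, h2, hu' j]
  have hdvd : ∀ j, (q : ℤ) ∣ z j := by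
    have hp_dvd : ∀ p ∈ q.primeFactors, ∀ j, (p : ℤ) ∣ z j := by
      intro p hp j
      have hpp : p.Prime := Nat.prime_of_mem_primeFactors hp
      have hpq : p ∣ q := Nat.dvd_of_mem_primeFactors hp
      haveI := Fact.mk hpp
      obtain ⟨T, hTM, hTcard, hTli⟩ := hM p hpp hpq
      set B : Matrix (Fin m) (Fin n) (ZMod p) := A.map (Int.cast : ℤ → ZMod p) with hB
      have hcast : ∀ j', B.vecMul (fun i => ((k i : ℤ) : ZMod p)) j' = ((z j' : ℤ) : ZMod p) := by
        intro j'
        simp only [Matrix.vecMul, dotProduct, hB, Matrix.map_apply, hz]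
        push_cast
        rfl
      have hT0 : ∀ j' ∈ T, B.vecMul (fun i => ((k i : ℤ) : ZMod p)) j' = 0 := by
        intro j' hj'
        rw [hcast]
        have hx0 : (u + v) j' = 0 := hxM j' (hTM hj')
        have := hqx j'
        rw [hx0, mul_zero] at this
        have hzz : z j' = -((q : ℤ) * u' j') := by exact_mod_cast (by linarith : ((z j' : ℤ) : ℚ) = -((q:ℚ) * (u' j' : ℚ)))
        rw [hzz]
        push_cast
        have : ((q : ℕ) : ZMod p) = 0 := (ZMod.natCast_eq_zero_iff q p).mpr hpq
        rw [this]
        ring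
      have hli' : LinearIndependent (ZMod p) fun j' : T => fun i : Fin m => B i (j' : Fin n) := hTli
      have := rowspace_vanish B T hTcard hli' (fun i => ((k i : ℤ) : ZMod p)) hT0 j
      rw [hcast] at this
      exact (ZMod.intCast_zmod_eq_zero_iff_dvd _ p).mp this
    intro j
    have hnat : (∏ p ∈ q.primeFactors, p) ∣ (z j).natAbs := by
      apply Finset.prod_primes_dvd
      · intro p hp
        exact (Nat.prime_of_mem_primeFactors hp).prime
      · intro p hp
        have := hp_dvd p hp j
        have h2 : ((p : ℤ)).natAbs ∣ (z j).natAbs := Int.natAbs_dvd_natAbs.mpr this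
        simpa using h2
    rw [Nat.prod_primeFactors_of_squarefree hqsf] at hnat
    have : ((q : ℤ)).natAbs ∣ (z j).natAbs := by simpa using hnat
    exact Int.natAbs_dvd_natAbs.mp this
  rw [intLattice_eq, mem_intCoords]
  intro j
  obtain ⟨t, ht⟩ := hdvd j
  refine ⟨u' j + t, ?_⟩
  have hq : (q : ℚ) ≠ 0 := Nat.cast_ne_zero.mpr hq0.ne'
  apply mul_left_cancel₀ hq
  rw [hqx j, ht]
  push_cast
  ring

lemma li_single (ι : Type*) [Fintype ι] [DecidableEq ι] :
    LinearIndependent ℤ (fun i : ι => (Pi.single i 1 : ι → ℚ)) := by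
  rw [Fintype.linearIndependent_iff]
  intro g hg i
  have h := congrFun hg i
  simp only [Finset.sum_apply, Pi.smul_apply, Pi.single_apply, zsmul_eq_mul, Pi.mul_apply, mul_ite, mul_one,
    mul_zero, Pi.intCast_apply, Finset.sum_ite_eq, Finset.mem_univ, if_true, Pi.zero_apply] at h
  exact_mod_cast h

set_option maxHeartbeats 2000000 in
/-- if M contains, for every prime p ∣ q, the indices of rank_p(A) columns
of A that are linearly independent over 𝔽_p, then d(ℰ, Λ) ≤ |M|. -/
theorem stmt4 (n m : ℕ) (a : Fin m → (Fin n → ℚ)) (q : ℕ) (hq0 : 0 < q)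
    (hqsf : Squarefree q)
    (A : Matrix (Fin m) (Fin n) ℤ)
    (hA : ∀ i j, (q : ℚ) * a i j = (A i j : ℚ))
    (M : Finset (Fin n))
    (hM : ∀ p : ℕ, p.Prime → p ∣ q →
      ∃ T : Finset (Fin n), T ⊆ M ∧
        T.card = (A.map (Int.cast : ℤ → ZMod p)).rank ∧
        LinearIndependent (ZMod p) fun j : T => fun i : Fin m => (A i j : ZMod p)) :
    defect n (intLattice n ⊔ Submodule.span ℤ (Set.range a)) ≤ M.card := by
  classical
  set Λ : Submodule ℤ (Fin n → ℚ) := intLattice n ⊔ Submodule.span ℤ (Set.range a) with hΛ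
  have hkey : ∀ x ∈ Λ, (∀ i ∈ M, x i = 0) → x ∈ intLattice n :=
    fun x hx hxM => key_claim n m a q hq0 hqsf A hA M hM x hx hxM
  have hsingleΛ : ∀ i : Fin n, (Pi.single i 1 : Fin n → ℚ) ∈ Λ := fun i =>
    Submodule.mem_sup_left (Submodule.subset_span ⟨i, rfl⟩)
  -- Λ is finitely generated
  have hΛfg : Λ.FG := by
    apply Submodule.FG.sup
    · exact Submodule.fg_span (Set.finite_range _)
    · exact Submodule.fg_span (Set.finite_range a)
  -- the projection to M-coordinates
  set π : (Fin n → ℚ) →ₗ[ℤ] ({x // x ∈ M} → ℚ) :=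
    LinearMap.funLeft ℤ ℚ (fun j : {x // x ∈ M} => (j : Fin n)) with hπ
  set Q : Submodule ℤ ({x // x ∈ M} → ℚ) := Λ.map π with hQ
  haveI hQfin : Module.Finite ℤ ↥Q := Module.Finite.iff_fg.mpr (hΛfg.map π)
  haveI : Module.Free ℤ ↥Q := Module.free_of_finite_type_torsion_free'
  -- finrank of Q is M.card
  have hub : Module.finrank ℤ ↥Q ≤ M.card := by
    set cb := Module.Free.chooseBasis ℤ ↥Q
    have hli : LinearIndependent ℤ (fun i => (cb i : {x // x ∈ M} → ℚ)) :=
      cb.linearIndependent.map' Q.subtype (Submodule.ker_subtype Q)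
    rw [LinearIndependent.iff_fractionRing ℤ ℚ] at hli
    have := hli.fintype_card_le_finrank
    simpa [Module.finrank_fintype_fun_eq_card] using
      (Module.finrank_eq_card_chooseBasisIndex ℤ ↥Q).trans_le this
  have hlb : M.card ≤ Module.finrank ℤ ↥Q := by
    set std : {x // x ∈ M} → ↥Q := fun i =>
      ⟨π (Pi.single (i : Fin n) 1), ⟨Pi.single (i : Fin n) 1, hsingleΛ _, rfl⟩⟩ with hstd
    have hstdval : ∀ i, ((std i : {x // x ∈ M} → ℚ)) = Pi.single i 1 := by
      intro i
      funext j
      simp only [hstd, hπ, LinearMap.funLeft_apply]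
      rcases eq_or_ne j i with h | h
      · subst h; simp
      · have : (j : Fin n) ≠ (i : Fin n) := fun hc => h (Subtype.ext hc)
        simp [Pi.single_apply, this, h]
    have hli : LinearIndependent ℤ std := by
      apply LinearIndependent.of_comp Q.subtype
      have : (Q.subtype ∘ std) = fun i => (Pi.single i 1 : {x // x ∈ M} → ℚ) := by
        funext i; exact hstdval i
      rw [this]
      exact li_single _
    simpa using hli.fintype_card_le_finrank
  have hfr : Module.finrank ℤ ↥Q = M.card := le_antisymm hub hlb
  -- a basis of Q indexed by Fin M.card
  have hcardQ : Fintype.card (Module.Free.ChooseBasisIndex ℤ ↥Q) = M.card := by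
    rw [← Module.finrank_eq_card_chooseBasisIndex, hfr]
  set c : Basis (Fin M.card) ℤ ↥Q :=
    (Module.Free.chooseBasis ℤ ↥Q).reindex (Fintype.equivFinOfCardEq hcardQ) with hc
  -- lifts of the basis of Q to Λ
  have hlift : ∀ kk : Fin M.card, ∃ y, y ∈ Λ ∧ π y = (c kk : {x // x ∈ M} → ℚ) :=
    fun kk => (c kk).2
  choose b' hb'Λ hb'π using hlift
  -- the candidate basis family
  set w : ({x // x ∈ (Mᶜ : Finset (Fin n))} ⊕ Fin M.card) → ↥Λ := fun i => Sum.elim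
    (fun i : {x // x ∈ (Mᶜ : Finset (Fin n))} => (⟨Pi.single (i : Fin n) 1, hsingleΛ _⟩ : ↥Λ))
    (fun kk => (⟨b' kk, hb'Λ kk⟩ : ↥Λ)) i with hw
  -- π kills the single vectors for i ∉ M
  have hπsingle : ∀ i : {x // x ∈ (Mᶜ : Finset (Fin n))},
      π (Pi.single (i : Fin n) 1) = 0 := by
    intro i
    funext j
    have hiM : (i : Fin n) ∉ M := Finset.mem_compl.mp i.2
    have : (j : Fin n) ≠ (i : Fin n) := fun hc => hiM (hc ▸ j.2)
    simp [hπ, LinearMap.funLeft_apply, Pi.single_apply, this]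
  -- linear independence of w
  have hwinl : ∀ i : {x // x ∈ (Mᶜ : Finset (Fin n))},
      (w (Sum.inl i) : Fin n → ℚ) = Pi.single (i : Fin n) 1 := fun i => rfl
  have hwinr : ∀ kk, (w (Sum.inr kk) : Fin n → ℚ) = b' kk := fun kk => rfl
  have hli : LinearIndependent ℤ w := by
    rw [Fintype.linearIndependent_iff]
    intro g hg
    have hg' : ∑ i : ({x // x ∈ (Mᶜ : Finset (Fin n))} ⊕ Fin M.card), g i • ((w i : Fin n → ℚ)) = 0 := by
      have h := congrArg Λ.subtype hg
      rw [map_sum, map_zero] at h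
      simpa using h
    have h2 : (∑ i : ({x // x ∈ (Mᶜ : Finset (Fin n))} ⊕ Fin M.card), g i • π ((w i : Fin n → ℚ))) = 0 := by
      have h := congrArg π hg'
      rw [map_sum, map_zero] at h
      refine (Finset.sum_congr rfl fun i _ => ?_).trans h
      exact (π.map_smul _ _).symm
    rw [Fintype.sum_sum_type] at h2
    have h2l : ∀ i : {x // x ∈ (Mᶜ : Finset (Fin n))},
        g (Sum.inl i) • π ((w (Sum.inl i) : Fin n → ℚ)) = 0 := by
      intro i
      rw [hwinl, hπsingle, smul_zero]
    rw [Finset.sum_congr rfl (fun i _ => h2l i), Finset.sum_const, smul_zero, zero_add] at h2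
    have h3 : ∑ kk, g (Sum.inr kk) • c kk = 0 := by
      have hcoe3 : ((∑ kk, g (Sum.inr kk) • c kk : ↥Q) : {x // x ∈ M} → ℚ) = 0 := by
        rw [AddSubmonoidClass.coe_finset_sum]
        calc (∑ kk, ((g (Sum.inr kk) • c kk : ↥Q) : {x // x ∈ M} → ℚ))
            = ∑ kk, g (Sum.inr kk) • (c kk : {x // x ∈ M} → ℚ) := by
              refine Finset.sum_congr rfl fun kk _ => ?_
              simp
          _ = 0 := by
              rw [← h2]
              refine Finset.sum_congr rfl fun kk _ => ?_
              rw [hwinr, hb'π]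
      exact Subtype.ext (by rw [hcoe3]; rfl)
    have hczero : ∀ kk, g (Sum.inr kk) = 0 :=
      Fintype.linearIndependent_iff.mp c.linearIndependent _ h3
    have hrem : ∑ i : {x // x ∈ (Mᶜ : Finset (Fin n))},
        g (Sum.inl i) • (Pi.single (i : Fin n) 1 : Fin n → ℚ) = 0 := by
      rw [Fintype.sum_sum_type] at hg'
      have : ∀ kk, g (Sum.inr kk) • ((w (Sum.inr kk) : Fin n → ℚ)) = 0 := by
        intro kk; rw [hczero kk, zero_smul]
      rw [Finset.sum_congr rfl (fun kk _ => this kk), Finset.sum_const, smul_zero, add_zero] at hg'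
      rw [← hg']
      exact Finset.sum_congr rfl fun i _ => by rw [hwinl]
    intro i
    rcases i with i | kk
    · have h := congrFun hrem (i : Fin n)
      rw [Finset.sum_apply] at h
      have hterm : ∀ i' : {x // x ∈ (Mᶜ : Finset (Fin n))},
          (g (Sum.inl i') • (Pi.single (i' : Fin n) 1 : Fin n → ℚ)) (i : Fin n)
            = if (i : Fin n) = (i' : Fin n) then (g (Sum.inl i') : ℚ) else 0 := by
        intro i'
        simp only [Pi.smul_apply, Pi.single_apply, zsmul_eq_mul, mul_ite, mul_one, mul_zero]
      rw [Finset.sum_congr rfl (fun i' _ => hterm i')] at h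
      have hterm2 : ∀ i' : {x // x ∈ (Mᶜ : Finset (Fin n))},
          (if (i : Fin n) = (i' : Fin n) then (g (Sum.inl i') : ℚ) else 0)
            = if i = i' then (g (Sum.inl i') : ℚ) else 0 := by
        intro i'
        congr 1
        exact propext Subtype.ext_iff.symm
      rw [Finset.sum_congr rfl (fun i' _ => hterm2 i'), Finset.sum_ite_eq] at h
      simp only [Finset.mem_univ, if_true, Pi.zero_apply] at h
      exact_mod_cast h
    · exact hczero kk
  -- spanning
  have hsp : ⊤ ≤ Submodule.span ℤ (Set.range w) := by
    rintro x -
    have hπx : π ↑x ∈ Q := ⟨↑x, x.2, rfl⟩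
    set d : Fin M.card → ℤ := fun kk => c.repr ⟨π ↑x, hπx⟩ kk with hd
    have hsum : ∑ kk, d kk • c kk = ⟨π ↑x, hπx⟩ := c.sum_repr _
    have hsum' : ∑ kk, d kk • (c kk : {x // x ∈ M} → ℚ) = π ↑x := by
      have h := congrArg Subtype.val hsum
      rw [AddSubmonoidClass.coe_finset_sum] at h
      have h2' : (Subtype.val (⟨π ↑x, hπx⟩ : ↥Q)) = π ↑x := rfl
      rw [h2'] at h
      rw [← h]
      exact (Finset.sum_congr rfl fun kk _ => by simp).symm
    set y : Fin n → ℚ := (x : Fin n → ℚ) - ∑ kk, d kk • b' kk with hy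
    have hyΛ : y ∈ Λ := Submodule.sub_mem _ x.2
      (Submodule.sum_mem _ fun kk _ => Submodule.smul_mem _ _ (hb'Λ kk))
    have hπy : π y = 0 := by
      rw [hy, map_sub, map_sum]
      have : ∑ kk, π (d kk • b' kk) = π ↑x := by
        rw [← hsum']
        exact Finset.sum_congr rfl fun kk _ => by rw [_root_.map_smul, hb'π]
      rw [this, sub_self]
    have hyM : ∀ i ∈ M, y i = 0 := by
      intro i hi
      exact congrFun hπy (⟨i, hi⟩ : {x // x ∈ M})
    have hyint := hkey y hyΛ hyM
    rw [intLattice_eq, mem_intCoords] at hyint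
    choose t ht using hyint
    have htM : ∀ i ∈ M, t i = 0 := by
      intro i hi
      have := (ht i).symm.trans (hyM i hi)
      exact_mod_cast this
    have hyrepr : y = ∑ i : {x // x ∈ (Mᶜ : Finset (Fin n))},
        t (i : Fin n) • (Pi.single (i : Fin n) 1 : Fin n → ℚ) := by
      funext j
      rw [Finset.sum_apply]
      have hterm : ∀ i' : {x // x ∈ (Mᶜ : Finset (Fin n))},
          (t (i' : Fin n) • (Pi.single (i' : Fin n) 1 : Fin n → ℚ)) j
            = if j = (i' : Fin n) then (t (i' : Fin n) : ℚ) else 0 := by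
        intro i'
        simp only [Pi.smul_apply, Pi.single_apply, zsmul_eq_mul, mul_ite, mul_one, mul_zero]
      rw [Finset.sum_congr rfl (fun i' _ => hterm i')]
      rw [Finset.sum_coe_sort (Mᶜ : Finset (Fin n)) (fun i' => if j = i' then (t i' : ℚ) else 0)]
      rw [Finset.sum_ite_eq]
      by_cases hj : j ∈ (Mᶜ : Finset (Fin n))
      · rw [if_pos hj]; exact ht j
      · rw [if_neg hj]
        have hjM : j ∈ M := by simpa using hj
        rw [hyM j hjM]
    have hxeq : x = ∑ kk, d kk • w (Sum.inr kk)
        + ∑ i : {x // x ∈ (Mᶜ : Finset (Fin n))}, t (i : Fin n) • w (Sum.inl i) := by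
      refine Subtype.ext ?_
      show (x : Fin n → ℚ) = _
      rw [Submodule.coe_add, AddSubmonoidClass.coe_finset_sum,
        AddSubmonoidClass.coe_finset_sum]
      have e1 : ∀ kk ∈ Finset.univ, ((d kk • w (Sum.inr kk) : ↥Λ) : Fin n → ℚ)
          = d kk • b' kk := fun kk _ => by rw [Submodule.coe_smul, hwinr]
      have e2 : ∀ i' : {x // x ∈ (Mᶜ : Finset (Fin n))}, i' ∈ Finset.univ →
          ((t (i' : Fin n) • w (Sum.inl i') : ↥Λ) : Fin n → ℚ)
          = t (i' : Fin n) • (Pi.single ((i' : Fin n)) 1 : Fin n → ℚ) :=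
        fun i' _ => by rw [Submodule.coe_smul, hwinl]
      rw [Finset.sum_congr rfl e1, Finset.sum_congr rfl e2, ← hyrepr, hy]
      ring
    rw [hxeq]
    exact Submodule.add_mem _
      (Submodule.sum_mem _ fun kk _ => Submodule.smul_mem _ _
        (Submodule.subset_span ⟨Sum.inr kk, rfl⟩))
      (Submodule.sum_mem _ fun i _ => Submodule.smul_mem _ _
        (Submodule.subset_span ⟨Sum.inl i, rfl⟩))
  -- assemble the basis and conclude
  have hMle : M.card ≤ n := by
    have := Finset.card_le_univ M
    simpa using this
  have hcards : Fintype.card ({x // x ∈ (Mᶜ : Finset (Fin n))} ⊕ Fin M.card) = n := by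
    rw [Fintype.card_sum, Fintype.card_coe, Fintype.card_fin]
    have hcompl : (Mᶜ : Finset (Fin n)).card = n - M.card := by
      rw [Finset.card_compl]
      simp
    rw [hcompl]
    omega
  set eqv : ({x // x ∈ (Mᶜ : Finset (Fin n))} ⊕ Fin M.card) ≃ Fin n := Fintype.equivFinOfCardEq hcards with heqv
  set bb : Basis (Fin n) ℤ ↥Λ := (Basis.mk hli hsp).reindex eqv with hbb
  apply Nat.sInf_le
  refine ⟨Mᶜ, bb, ?_, ?_⟩
  · rw [Finset.card_compl]; simp
  · intro i hi
    refine ⟨eqv (Sum.inl ⟨i, hi⟩), ?_⟩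
    rw [hbb, Basis.reindex_apply, Equiv.symm_apply_apply, Basis.mk_apply]
    exact hwinl ⟨i, hi⟩
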